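/- For k ≥ 2 and any arithmetic functions f, r with f = 1 * r (Dirichlet convolution with the constant function 1), Σ_{n_1,…,n_k ≤ x} f((n_1,…,n_k)_b) = Σ_{d ≤ x^{1/b}} (f * μ)(d) · ⌊x/d^b⌋^k, where (n_1,…,n_k)_b := max{d ≥ 1 : d^b | n_i for all i}. -/

import Mathlib

/-- The generalized gcd of `k` positive integers:
the largest `d ≥ 1` with `d^b ∣ nᵢ` for all `i`. -/
noncomputable def ggcdk (b k : ℕ) (n : Fin k → ℕ) : ℕ :=
  sSup {d : ℕ | 0 < d ∧ ∀ i, d ^ b ∣ n i}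

private lemma lcm_pow_dvd {b a c m : ℕ} (hb : 1 ≤ b) (hm : 0 < m)
    (ha : a ^ b ∣ m) (hc : c ^ b ∣ m) : Nat.lcm a c ^ b ∣ m := by
  have hb0 : b ≠ 0 := by omega
  have ha0 : a ≠ 0 := by
    rintro rfl
    rw [zero_pow hb0] at ha
    exact absurd (Nat.eq_zero_of_zero_dvd ha) hm.ne'
  have hc0 : c ≠ 0 := by
    rintro rfl
    rw [zero_pow hb0] at hc
    exact absurd (Nat.eq_zero_of_zero_dvd hc) hm.ne'
  have hl0 : Nat.lcm a c ≠ 0 := Nat.lcm_ne_zero ha0 hc0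
  rw [← Nat.factorization_le_iff_dvd (pow_ne_zero _ hl0) hm.ne',
    Nat.factorization_pow, Nat.factorization_lcm ha0 hc0]
  rw [← Nat.factorization_le_iff_dvd (pow_ne_zero _ ha0) hm.ne', Nat.factorization_pow] at ha
  rw [← Nat.factorization_le_iff_dvd (pow_ne_zero _ hc0) hm.ne', Nat.factorization_pow] at hc
  rw [Finsupp.le_def]
  intro p
  have h1 : b * a.factorization p ≤ m.factorization p := by
    simpa using (Finsupp.le_def.mp ha) p
  have h2 : b * c.factorization p ≤ m.factorization p := by
    simpa using (Finsupp.le_def.mp hc) p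
  simp only [Finsupp.smul_apply, Finsupp.sup_apply, smul_eq_mul]
  rcases le_total (a.factorization p) (c.factorization p) with h | h
  · rw [sup_of_le_right h]; exact h2
  · rw [sup_of_le_left h]; exact h1

private lemma ggcdk_mem {b k : ℕ} (hb : 1 ≤ b) (hk : 0 < k) (n : Fin k → ℕ)
    (hn : ∀ i, 0 < n i) :
    0 < ggcdk b k n ∧ ∀ i, (ggcdk b k n) ^ b ∣ n i := by
  have i0 : Fin k := ⟨0, hk⟩
  have hbdd : BddAbove {d : ℕ | 0 < d ∧ ∀ i, d ^ b ∣ n i} := by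
    refine ⟨n i0, fun e he => ?_⟩
    calc e ≤ e ^ b := Nat.le_self_pow (by omega) e
    _ ≤ n i0 := Nat.le_of_dvd (hn i0) (he.2 i0)
  have hne : Set.Nonempty {d : ℕ | 0 < d ∧ ∀ i, d ^ b ∣ n i} :=
    ⟨1, one_pos, fun i => by simp⟩
  exact Nat.sSup_mem hne hbdd

private lemma ggcdk_divisors {b k : ℕ} (hb : 1 ≤ b) (hk : 0 < k) (n : Fin k → ℕ)
    (hn : ∀ i, 0 < n i) (d : ℕ) :
    d ∈ (ggcdk b k n).divisors ↔ 0 < d ∧ ∀ i, d ^ b ∣ n i := by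
  have i0 : Fin k := ⟨0, hk⟩
  have hbdd : BddAbove {d : ℕ | 0 < d ∧ ∀ i, d ^ b ∣ n i} := by
    refine ⟨n i0, fun e he => ?_⟩
    calc e ≤ e ^ b := Nat.le_self_pow (by omega) e
    _ ≤ n i0 := Nat.le_of_dvd (hn i0) (he.2 i0)
  obtain ⟨hM0, hMdvd⟩ := ggcdk_mem hb hk n hn
  constructor
  · intro hd
    have hdvd : d ∣ ggcdk b k n := (Nat.mem_divisors.mp hd).1
    exact ⟨Nat.pos_of_dvd_of_pos hdvd hM0, fun i =>
      (pow_dvd_pow_of_dvd hdvd b).trans (hMdvd i)⟩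
  · intro hd
    have hLpos : 0 < Nat.lcm d (ggcdk b k n) := Nat.lcm_pos hd.1 hM0
    have hL : Nat.lcm d (ggcdk b k n) ∈ {d : ℕ | 0 < d ∧ ∀ i, d ^ b ∣ n i} :=
      ⟨hLpos, fun i => lcm_pow_dvd hb (hn i) (hd.2 i) (hMdvd i)⟩
    have hle : Nat.lcm d (ggcdk b k n) ≤ ggcdk b k n := le_csSup hbdd hL
    have hEq : Nat.lcm d (ggcdk b k n) = ggcdk b k n :=
      Nat.le_antisymm hle (Nat.le_of_dvd hLpos (Nat.dvd_lcm_right _ _))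
    rw [Nat.mem_divisors]
    exact ⟨hEq ▸ Nat.dvd_lcm_left _ _, hM0.ne'⟩

theorem sum_f_ggcdk (b k : ℕ) (hb : 1 ≤ b) (hk : 2 ≤ k) (x : ℝ) (hx : 1 ≤ x)
    (f r : ℕ → ℝ) (hfr : ∀ n : ℕ, 0 < n → f n = ∑ d ∈ n.divisors, r d) :
    ∑ n ∈ Fintype.piFinset (fun _ : Fin k => Finset.Icc 1 ⌊x⌋₊), f (ggcdk b k n) =
      ∑ d ∈ Finset.Icc 1 ⌊x ^ ((1 : ℝ) / b)⌋₊,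
        (∑ e ∈ d.divisors, f e * (ArithmeticFunction.moebius (d / e) : ℝ)) *
          (⌊x / (d : ℝ) ^ b⌋₊ : ℝ) ^ k := by
  have hx0 : (0:ℝ) ≤ x := by linarith
  have hbR : (b:ℝ) ≠ 0 := by
    have : 0 < b := hb
    positivity
  set N := ⌊x⌋₊ with hN
  set D := ⌊x ^ ((1:ℝ)/b)⌋₊ with hD
  have i0 : Fin k := ⟨0, by omega⟩
  -- step A: rewrite each summand
  have key : ∀ n ∈ Fintype.piFinset (fun _ : Fin k => Finset.Icc 1 N),
      f (ggcdk b k n) =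
        ∑ d ∈ (Finset.Icc 1 D).filter (fun d => ∀ i, d ^ b ∣ n i), r d := by
    intro n hnA
    have hn' : ∀ i, 1 ≤ n i ∧ n i ≤ N := by
      intro i
      simpa [Finset.mem_Icc] using Fintype.mem_piFinset.mp hnA i
    have hpos : ∀ i, 0 < n i := fun i => (hn' i).1
    obtain ⟨hM0, _⟩ := ggcdk_mem hb (by omega) n hpos
    rw [hfr _ hM0]
    refine Finset.sum_congr ?_ (fun _ _ => rfl)
    ext d
    rw [ggcdk_divisors hb (by omega) n hpos d, Finset.mem_filter, Finset.mem_Icc]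
    constructor
    · rintro ⟨hd0, hdvd⟩
      refine ⟨⟨hd0, ?_⟩, hdvd⟩
      have hd0' : (0:ℝ) ≤ (d:ℝ) := by positivity
      have hdb : (d:ℝ) ^ b ≤ x := by
        have h1 : d ^ b ≤ n i0 := Nat.le_of_dvd (hpos i0) (hdvd i0)
        have h2 : (n i0 : ℝ) ≤ x :=
          le_trans (Nat.cast_le.mpr (hn' i0).2) (Nat.floor_le hx0)
        calc ((d:ℝ)) ^ b = ((d ^ b : ℕ) : ℝ) := by push_cast; ring
        _ ≤ (n i0 : ℝ) := Nat.cast_le.mpr h1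
        _ ≤ x := h2
      apply Nat.le_floor
      have hdd : ((d:ℝ) ^ (b:ℝ)) ^ ((1:ℝ)/b) = (d:ℝ) := by
        rw [← Real.rpow_mul hd0', mul_one_div, div_self hbR, Real.rpow_one]
      calc (d:ℝ) = ((d:ℝ) ^ (b:ℝ)) ^ ((1:ℝ)/b) := hdd.symm
      _ ≤ x ^ ((1:ℝ)/b) :=
          Real.rpow_le_rpow (by positivity) (by rwa [Real.rpow_natCast]) (by positivity)
    · rintro ⟨⟨h1, _⟩, hdvd⟩
      exact ⟨h1, hdvd⟩
  rw [Finset.sum_congr rfl key]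
  -- step B: swap sums
  have hswap : ∑ n ∈ Fintype.piFinset (fun _ : Fin k => Finset.Icc 1 N),
      ∑ d ∈ (Finset.Icc 1 D).filter (fun d => ∀ i, d ^ b ∣ n i), r d =
      ∑ d ∈ Finset.Icc 1 D,
        (((Fintype.piFinset (fun _ : Fin k => Finset.Icc 1 N)).filter
          (fun n => ∀ i, d ^ b ∣ n i)).card : ℝ) * r d := by
    calc ∑ n ∈ Fintype.piFinset (fun _ : Fin k => Finset.Icc 1 N),
          ∑ d ∈ (Finset.Icc 1 D).filter (fun d => ∀ i, d ^ b ∣ n i), r d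
        = ∑ n ∈ Fintype.piFinset (fun _ : Fin k => Finset.Icc 1 N),
            ∑ d ∈ Finset.Icc 1 D, if (∀ i, d ^ b ∣ n i) then r d else 0 :=
          Finset.sum_congr rfl fun n _ => Finset.sum_filter _ _
      _ = ∑ d ∈ Finset.Icc 1 D, ∑ n ∈ Fintype.piFinset (fun _ : Fin k => Finset.Icc 1 N),
            if (∀ i, d ^ b ∣ n i) then r d else 0 := Finset.sum_comm
      _ = ∑ d ∈ Finset.Icc 1 D,
            ∑ n ∈ (Fintype.piFinset (fun _ : Fin k => Finset.Icc 1 N)).filter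
              (fun n => ∀ i, d ^ b ∣ n i), r d :=
          Finset.sum_congr rfl fun d _ => (Finset.sum_filter _ _).symm
      _ = _ := by
          refine Finset.sum_congr rfl fun d _ => ?_
          rw [Finset.sum_const, nsmul_eq_mul]
  rw [hswap]
  -- step C: compute cardinalities
  have hcard : ∀ d : ℕ, ((Fintype.piFinset (fun _ : Fin k => Finset.Icc 1 N)).filter
      (fun n => ∀ i, d ^ b ∣ n i)).card = (N / d ^ b) ^ k := by
    intro d
    have hfil : (Fintype.piFinset (fun _ : Fin k => Finset.Icc 1 N)).filter
        (fun n => ∀ i, d ^ b ∣ n i) =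
        Fintype.piFinset (fun _ : Fin k => (Finset.Icc 1 N).filter (fun m => d ^ b ∣ m)) := by
      ext n
      simp only [Finset.mem_filter, Fintype.mem_piFinset]
      constructor
      · rintro ⟨h1, h2⟩
        exact fun i => ⟨h1 i, h2 i⟩
      · intro h
        exact ⟨fun i => (h i).1, fun i => (h i).2⟩
    rw [hfil, Fintype.card_piFinset]
    have hIoc : ((Finset.Icc 1 N).filter (fun m => d ^ b ∣ m)).card = N / d ^ b := by
      rw [show Finset.Icc 1 N = Finset.Ioc 0 N from Finset.Icc_add_one_left_eq_Ioc 0 N]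
      exact Nat.Ioc_filter_dvd_card_eq_div N (d ^ b)
    simp [hIoc]
  have hfloor : ∀ d : ℕ, (N / d ^ b : ℕ) = ⌊x / (d:ℝ) ^ b⌋₊ := by
    intro d
    rw [hN, ← Nat.floor_div_natCast x (d ^ b)]
    congr 2
    push_cast
    ring
  -- step D: Moebius inversion
  have hmoeb : ∀ d : ℕ, 0 < d →
      (∑ e ∈ d.divisors, f e * (ArithmeticFunction.moebius (d / e) : ℝ)) = r d := by
    have hinv := (ArithmeticFunction.sum_eq_iff_sum_mul_moebius_eq (R := ℝ)
      (f := r) (g := f)).mp (fun n hn => (hfr n hn).symm)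
    intro d hd
    have h2 := hinv d hd
    rw [Nat.sum_divisorsAntidiagonal'
      (f := fun a c => (ArithmeticFunction.moebius a : ℝ) * f c)] at h2
    rw [← h2]
    exact Finset.sum_congr rfl fun e _ => mul_comm _ _
  refine Finset.sum_congr rfl fun d hd => ?_
  have hd1 : 1 ≤ d := (Finset.mem_Icc.mp hd).1
  rw [hmoeb d hd1, hcard d]
  have := hfloor d
  push_cast [← this]
  ring
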